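/- arXiv:1304.6371 — 3 statements merged into one kernel-verified Lean document; each statement's English description precedes it below -/
import Mathlib

section
/- Let (R, ⊕, ·) be a semihyperring. Then R is fully idempotent if and only if every fuzzy hyperideal λ of R equals the pointwise infimum of the family of all fuzzy prime hyperideals of R that contain λ, i.e. λ(x) = inf{η(x) : η a fuzzy prime hyperideal of R with λ ≤ η} for all x ∈ R. -/
/-- The unit interval `[0,1]` is a complete lattice. -/
noncomputable instance : Fact ((0:ℝ) ≤ 1) := ⟨zero_le_one⟩

/-- A semihyperring `(R, ⊕, ·)`: a hyperoperation `hadd` (with nonempty values),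
a binary multiplication `mul`, and an element `zero`, satisfying commutativity and
(extended) associativity of `⊕`, associativity of `·`, two-sided distributivity of
`·` over `⊕` (as sets), and `0 ⊕ x = {x}`, `0·x = 0 = x·0`. -/
class Semihyperring (R : Type*) where
  hadd : R → R → Set R
  mul : R → R → R
  zero : R
  hadd_nonempty : ∀ x y : R, (hadd x y).Nonempty
  hadd_comm : ∀ x y : R, hadd x y = hadd y x
  hadd_assoc : ∀ x y z : R, (⋃ w ∈ hadd y z, hadd x w) = ⋃ w ∈ hadd x y, hadd w z
  mul_assoc : ∀ x y z : R, mul (mul x y) z = mul x (mul y z)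
  left_distrib : ∀ x y z : R, (fun w => mul x w) '' hadd y z = hadd (mul x y) (mul x z)
  right_distrib : ∀ x y z : R, (fun w => mul w z) '' hadd x y = hadd (mul x z) (mul y z)
  zero_hadd : ∀ x : R, hadd zero x = {x}
  hadd_zero : ∀ x : R, hadd x zero = {x}
  zero_mul : ∀ x : R, mul zero x = zero
  mul_zero : ∀ x : R, mul x zero = zero

namespace Semihyperring

variable {R : Type*} [Semihyperring R]

/-- The hyperoperation `⊕` extended to subsets: `A ⊕ B = ⋃ {a ⊕ b : a ∈ A, b ∈ B}`. -/
def haddSet (A B : Set R) : Set R := ⋃ a ∈ A, ⋃ b ∈ B, hadd a b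

/-- The hypersum `x₁ ⊕ x₂ ⊕ ⋯ ⊕ xₚ` of a list of elements (the empty hypersum is `{0}`,
which is neutral since `0 ⊕ x = {x}`). -/
def hsumList : List R → Set R
  | [] => {zero}
  | x :: xs => haddSet {x} (hsumList xs)

/-- A (two-sided) hyperideal: a nonempty subset closed under `⊕` and under
multiplication by arbitrary elements of `R` on both sides. -/
def IsHyperideal (I : Set R) : Prop :=
  I.Nonempty ∧ (∀ x ∈ I, ∀ y ∈ I, hadd x y ⊆ I) ∧
    (∀ r : R, ∀ x ∈ I, mul r x ∈ I ∧ mul x r ∈ I)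

/-- A right hyperideal. -/
def IsRightHyperideal (I : Set R) : Prop :=
  I.Nonempty ∧ (∀ x ∈ I, ∀ y ∈ I, hadd x y ⊆ I) ∧ (∀ x ∈ I, ∀ r : R, mul x r ∈ I)

/-- A left hyperideal. -/
def IsLeftHyperideal (I : Set R) : Prop :=
  I.Nonempty ∧ (∀ x ∈ I, ∀ y ∈ I, hadd x y ⊆ I) ∧ (∀ x ∈ I, ∀ r : R, mul r x ∈ I)

/-- The product of two subsets:
`AB = {x : x ∈ a₁b₁ ⊕ ⋯ ⊕ aₚbₚ for some p ≥ 1, aᵢ ∈ A, bᵢ ∈ B}`. -/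
def setProd (A B : Set R) : Set R :=
  {x | ∃ l : List (R × R), l ≠ [] ∧ (∀ p ∈ l, p.1 ∈ A ∧ p.2 ∈ B) ∧
    x ∈ hsumList (l.map fun p => mul p.1 p.2)}

/-- `R` is fully idempotent if every hyperideal `I` satisfies `I² = I`. -/
def FullyIdempotent (R : Type*) [Semihyperring R] : Prop :=
  ∀ I : Set R, IsHyperideal I → setProd I I = I

/-- `R` is (von Neumann) regular if every `x` satisfies `x = x·a·x` for some `a`. -/
def Regular (R : Type*) [Semihyperring R] : Prop :=
  ∀ x : R, ∃ a : R, x = mul (mul x a) x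

/-- A fuzzy hyperideal of `R`: a function `μ : R → [0,1]` with
`inf {μ z : z ∈ x ⊕ y} ≥ min (μ x) (μ y)` and `μ (x·y) ≥ max (μ x) (μ y)`. -/
def IsFuzzyHyperideal (μ : R → unitInterval) : Prop :=
  (∀ x y : R, μ x ⊓ μ y ≤ ⨅ z ∈ hadd x y, μ z) ∧
  (∀ x y : R, μ x ⊔ μ y ≤ μ (mul x y))

/-- A fuzzy right hyperideal: `inf {λ z : z ∈ x ⊕ y} ≥ min (λ x) (λ y)` and `λ (x·y) ≥ λ x`. -/
def IsFuzzyRightHyperideal (μ : R → unitInterval) : Prop :=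
  (∀ x y : R, μ x ⊓ μ y ≤ ⨅ z ∈ hadd x y, μ z) ∧
  (∀ x y : R, μ x ≤ μ (mul x y))

/-- A fuzzy left hyperideal: `inf {λ z : z ∈ x ⊕ y} ≥ min (λ x) (λ y)` and `λ (x·y) ≥ λ y`. -/
def IsFuzzyLeftHyperideal (μ : R → unitInterval) : Prop :=
  (∀ x y : R, μ x ⊓ μ y ≤ ⨅ z ∈ hadd x y, μ z) ∧
  (∀ x y : R, μ y ≤ μ (mul x y))

/-- The product `λμ` of fuzzy subsets:
`(λμ)(x) = ⋁ { ⋀_{1≤i≤p} (λ yᵢ ⊓ μ zᵢ) : p ≥ 1, x ∈ y₁z₁ ⊕ ⋯ ⊕ yₚzₚ }`. -/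
noncomputable def fprod (lam mu : R → unitInterval) (x : R) : unitInterval :=
  sSup {t | ∃ l : List (R × R), l ≠ [] ∧
    x ∈ hsumList (l.map fun p => mul p.1 p.2) ∧
    t = ⨅ p ∈ l, lam p.1 ⊓ mu p.2}

/-- The sum `λ ⊕ μ` of fuzzy subsets:
`(λ ⊕ μ)(x) = ⋁ { λ y ⊓ μ z : x ∈ y ⊕ z }`. -/
noncomputable def fsum (lam mu : R → unitInterval) (x : R) : unitInterval :=
  sSup {t | ∃ y z : R, x ∈ hadd y z ∧ t = lam y ⊓ mu z}

/-- The composition `λ ∘ μ` of fuzzy subsets: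
`(λ ∘ μ)(x) = ⋁ { λ y ⊓ μ z : x = y·z }` (with `⋁ ∅ = 0`). -/
noncomputable def fcomp (lam mu : R → unitInterval) (x : R) : unitInterval :=
  sSup {t | ∃ y z : R, x = mul y z ∧ t = lam y ⊓ mu z}

/-- A fuzzy prime hyperideal: a fuzzy hyperideal `η` such that for all fuzzy hyperideals
`λ, μ`, `λμ ≤ η` implies `λ ≤ η` or `μ ≤ η`. -/
def IsFuzzyPrimeHyperideal (η : R → unitInterval) : Prop :=
  IsFuzzyHyperideal η ∧ ∀ lam mu : R → unitInterval, IsFuzzyHyperideal lam →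
    IsFuzzyHyperideal mu → fprod lam mu ≤ η → lam ≤ η ∨ mu ≤ η

/-- A fuzzy irreducible hyperideal: a fuzzy hyperideal `η` such that for all fuzzy
hyperideals `λ, μ`, `min (λ, μ) = η` (pointwise) implies `λ = η` or `μ = η`. -/
def IsFuzzyIrreducibleHyperideal (η : R → unitInterval) : Prop :=
  IsFuzzyHyperideal η ∧ ∀ lam mu : R → unitInterval, IsFuzzyHyperideal lam →
    IsFuzzyHyperideal mu → lam ⊓ mu = η → lam = η ∨ mu = η

/-- `FP R`: the set of proper fuzzy prime hyperideals of `R`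
(`η` is proper if it is not the constant function `1`). -/
def FP (R : Type*) [Semihyperring R] : Set (R → unitInterval) :=
  {η | IsFuzzyPrimeHyperideal η ∧ η ≠ fun _ => 1}

/-- `O λ = {μ ∈ FP R : λ ≰ μ}`. -/
def O (lam : R → unitInterval) : Set (R → unitInterval) :=
  {mu ∈ FP R | ¬ lam ≤ mu}

/-- The sum `Σᵢ ηᵢ` of an arbitrary family of fuzzy subsets:
`(Σᵢ ηᵢ)(x) = ⋁ { ⋀_{1≤k≤p} η_{i_k} (x_k) : p ≥ 1, x ∈ x₁ ⊕ ⋯ ⊕ xₚ }`. -/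
noncomputable def famSum {ι : Type*} (η : ι → R → unitInterval) (x : R) : unitInterval :=
  sSup {t | ∃ l : List (ι × R), l ≠ [] ∧ x ∈ hsumList (l.map Prod.snd) ∧
    t = ⨅ p ∈ l, η p.1 p.2}

end Semihyperring

namespace Semihyperring
variable {R : Type*} [Semihyperring R]

lemma biInf_cons {α : Type*} (f : α → unitInterval) (a : α) (l : List α) :
    ⨅ y ∈ (a::l : List α), f y = f a ⊓ ⨅ y ∈ l, f y := by
  simp [List.mem_cons, iInf_or, iInf_inf_eq]

lemma hsumList_singleton (a : R) : hsumList [a] = {a} := by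
  simp [hsumList, haddSet, hadd_zero]

lemma haddSet_zero_left (S : Set R) : haddSet {zero} S = S := by
  simp [haddSet, zero_hadd]

lemma haddSet_assoc (A B C : Set R) :
    haddSet (haddSet A B) C = haddSet A (haddSet B C) := by
  ext x
  simp only [haddSet, Set.mem_iUnion]
  constructor
  · rintro ⟨w, ⟨a, ha, b, hb, hw⟩, c, hc, hx⟩
    have := hadd_assoc a b c
    have hx' : x ∈ ⋃ v ∈ hadd a b, hadd v c := Set.mem_biUnion hw hx
    rw [← this] at hx'
    rcases Set.mem_iUnion₂.1 hx' with ⟨v, hv, hxv⟩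
    exact ⟨a, ha, v, ⟨b, hb, c, hc, hv⟩, hxv⟩
  · rintro ⟨a, ha, v, ⟨b, hb, c, hc, hv⟩, hx⟩
    have hx' : x ∈ ⋃ w ∈ hadd b c, hadd a w := Set.mem_biUnion hv hx
    rw [hadd_assoc a b c] at hx'
    rcases Set.mem_iUnion₂.1 hx' with ⟨w, hw, hxw⟩
    exact ⟨w, ⟨a, ha, b, hb, hw⟩, c, hc, hxw⟩

lemma hsumList_append (l m : List R) :
    hsumList (l ++ m) = haddSet (hsumList l) (hsumList m) := by
  induction l with
  | nil => simp [hsumList, haddSet_zero_left]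
  | cons a l ih =>
      show hsumList (a :: (l ++ m)) = _
      rw [hsumList, ih, hsumList, haddSet_assoc]

end Semihyperring
namespace Semihyperring
variable {R : Type*} [Semihyperring R]

lemma mem_hsumList_cons {x a : R} {l : List R} :
    x ∈ hsumList (a :: l) ↔ ∃ w ∈ hsumList l, x ∈ hadd a w := by
  simp [hsumList, haddSet]

/-- For a function satisfying the additive fuzzy condition, the value on any member of a
nonempty hypersum is at least the infimum over the list. -/
lemma inf_le_of_mem_hsumList {μ : R → unitInterval}
    (h1 : ∀ x y : R, μ x ⊓ μ y ≤ ⨅ z ∈ hadd x y, μ z) :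
    ∀ l : List R, l ≠ [] → ∀ x ∈ hsumList l, (⨅ y ∈ l, μ y) ≤ μ x := by
  intro l
  induction l with
  | nil => intro h; exact absurd rfl h
  | cons a l ih =>
      intro _ x hx
      rcases List.eq_nil_or_concat l with rfl | hl
      · rw [hsumList_singleton, Set.mem_singleton_iff] at hx
        subst hx; simp [biInf_cons]
      · have hlne : l ≠ [] := by rcases hl with ⟨l', b, rfl⟩; simp
        rcases mem_hsumList_cons.1 hx with ⟨w, hw, hxw⟩
        have h2 : μ a ⊓ μ w ≤ μ x := le_trans (h1 a w) (biInf_le _ hxw)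
        calc ⨅ y ∈ (a::l : List R), μ y = μ a ⊓ ⨅ y ∈ l, μ y := biInf_cons _ _ _
          _ ≤ μ a ⊓ μ w := inf_le_inf_left _ (ih hlne w hw)
          _ ≤ μ x := h2

lemma mul_mem_hsumList_left {r x : R} {l : List R} (hx : x ∈ hsumList l) :
    mul r x ∈ hsumList (l.map (mul r)) := by
  induction l generalizing x with
  | nil =>
      rw [hsumList, Set.mem_singleton_iff] at hx
      subst hx
      simp [hsumList, mul_zero]
  | cons a l ih =>
      rcases mem_hsumList_cons.1 hx with ⟨w, hw, hxw⟩
      refine mem_hsumList_cons.2 ⟨mul r w, ih hw, ?_⟩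
      have := left_distrib r a w
      rw [← this]
      exact ⟨x, hxw, rfl⟩

lemma mul_mem_hsumList_right {r x : R} {l : List R} (hx : x ∈ hsumList l) :
    mul x r ∈ hsumList (l.map (fun y => mul y r)) := by
  induction l generalizing x with
  | nil =>
      rw [hsumList, Set.mem_singleton_iff] at hx
      subst hx
      simp [hsumList, zero_mul]
  | cons a l ih =>
      rcases mem_hsumList_cons.1 hx with ⟨w, hw, hxw⟩
      refine mem_hsumList_cons.2 ⟨mul w r, ih hw, ?_⟩
      have := right_distrib a w r
      rw [← this]
      exact ⟨x, hxw, rfl⟩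

lemma mem_haddSet {A B : Set R} {x : R} :
    x ∈ haddSet A B ↔ ∃ a ∈ A, ∃ b ∈ B, x ∈ hadd a b := by
  simp [haddSet]

/-- product decomposition: an element of `hsum l` times an element of `hsum m`. -/
lemma mul_mem_hsumList_prod {y z : R} {l m : List R} (hl : l ≠ []) (hm : m ≠ [])
    (hy : y ∈ hsumList l) (hz : z ∈ hsumList m) :
    ∃ L : List (R × R), L ≠ [] ∧ (∀ p ∈ L, p.1 ∈ l ∧ p.2 ∈ m) ∧
      mul y z ∈ hsumList (L.map fun p => mul p.1 p.2) := by
  induction l generalizing y with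
  | nil => exact absurd rfl hl
  | cons a l ih =>
      rcases List.eq_nil_or_concat l with rfl | hl'
      · rw [hsumList_singleton, Set.mem_singleton_iff] at hy
        subst hy
        refine ⟨m.map (fun v => (y, v)), by simpa using hm, ?_, ?_⟩
        · intro p hp
          rcases List.mem_map.1 hp with ⟨v, hv, rfl⟩
          exact ⟨List.mem_cons_self, hv⟩
        · have := mul_mem_hsumList_left (r := y) hz
          rw [List.map_map]
          exact this
      · have hlne : l ≠ [] := by rcases hl' with ⟨l', b, rfl⟩; simp
        rcases mem_hsumList_cons.1 hy with ⟨w, hw, hyw⟩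
        rcases ih hlne hw with ⟨L, hLne, hLmem, hLm⟩
        refine ⟨m.map (fun v => (a, v)) ++ L, by simp [hLne], ?_, ?_⟩
        · intro p hp
          rcases List.mem_append.1 hp with hp | hp
          · rcases List.mem_map.1 hp with ⟨v, hv, rfl⟩
            exact ⟨List.mem_cons_self, hv⟩
          · exact ⟨List.mem_cons_of_mem _ (hLmem p hp).1, (hLmem p hp).2⟩
        · rw [List.map_append, hsumList_append, List.map_map]
          -- mul y z ∈ haddSet (hsumList (map (mul a) m)) (hsumList (L.map ...))
          have hmem : mul y z ∈ hadd (mul a z) (mul w z) := by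
            rw [← right_distrib a w z]; exact ⟨y, hyw, rfl⟩
          exact mem_haddSet.2 ⟨mul a z, mul_mem_hsumList_left (r := a) hz, mul w z, hLm, hmem⟩

end Semihyperring
namespace Semihyperring
variable {R : Type*} [Semihyperring R]

lemma biInf_append {α : Type*} (f : α → unitInterval) (l m : List α) :
    ⨅ y ∈ (l ++ m : List α), f y = (⨅ y ∈ l, f y) ⊓ ⨅ y ∈ m, f y := by
  induction l with
  | nil => simp
  | cons a l ih => rw [List.cons_append, biInf_cons, biInf_cons, ih, inf_assoc]

lemma le_fprod_single (lam mu : R → unitInterval) (u v : R) :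
    lam u ⊓ mu v ≤ fprod lam mu (mul u v) := by
  apply le_sSup
  refine ⟨[(u, v)], by simp, ?_, by simp⟩
  simp [hsumList_singleton]

lemma fprod_le {lam mu nu : R → unitInterval}
    (hnu1 : ∀ x y : R, nu x ⊓ nu y ≤ ⨅ z ∈ hadd x y, nu z)
    (h : ∀ u v : R, lam u ⊓ mu v ≤ nu (mul u v)) : fprod lam mu ≤ nu := by
  intro x
  apply sSup_le
  rintro t ⟨l, hl, hx, rfl⟩
  have hmain := inf_le_of_mem_hsumList hnu1 _ (by simpa using hl) x hx
  refine le_trans ?_ hmain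
  refine le_iInf₂ ?_
  intro y hy
  rcases List.mem_map.1 hy with ⟨p, hp, rfl⟩
  exact le_trans (biInf_le _ hp) (h p.1 p.2)

lemma fprod_mono {lam mu lam' mu' : R → unitInterval} (h1 : lam ≤ lam') (h2 : mu ≤ mu') :
    fprod lam mu ≤ fprod lam' mu' := by
  intro x
  apply sSup_le
  rintro t ⟨l, hl, hx, rfl⟩
  refine le_sSup_of_le ⟨l, hl, hx, rfl⟩ ?_
  exact iInf₂_mono fun p _ => inf_le_inf (h1 p.1) (h2 p.2)

lemma IsFuzzyHyperideal.mul_left {lam : R → unitInterval} (h : IsFuzzyHyperideal lam)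
    (r y : R) : lam y ≤ lam (mul r y) := le_trans le_sup_right (h.2 r y)

lemma IsFuzzyHyperideal.mul_right {lam : R → unitInterval} (h : IsFuzzyHyperideal lam)
    (r y : R) : lam y ≤ lam (mul y r) := le_trans le_sup_left (h.2 y r)

lemma fprod_le_inf {lam mu : R → unitInterval} (hlam : IsFuzzyHyperideal lam)
    (hmu : IsFuzzyHyperideal mu) : fprod lam mu ≤ lam ⊓ mu := by
  refine le_inf ?_ ?_
  · exact fprod_le hlam.1 fun u v => le_trans inf_le_left (hlam.mul_right v u)
  · exact fprod_le hmu.1 fun u v => le_trans inf_le_right (hmu.mul_left u v)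

lemma IsFuzzyHyperideal.inf {lam mu : R → unitInterval} (hlam : IsFuzzyHyperideal lam)
    (hmu : IsFuzzyHyperideal mu) : IsFuzzyHyperideal (lam ⊓ mu) := by
  constructor
  · intro x y
    refine le_iInf₂ fun z hz => ?_
    have h1 := le_trans (hlam.1 x y) (biInf_le _ hz)
    have h2 := le_trans (hmu.1 x y) (biInf_le _ hz)
    simp only [Pi.inf_apply, le_inf_iff]
    constructor
    · exact le_trans (inf_le_inf inf_le_left inf_le_left) h1
    · exact le_trans (inf_le_inf inf_le_right inf_le_right) h2
  · intro x y
    simp only [Pi.inf_apply, sup_le_iff, le_inf_iff]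
    exact ⟨⟨le_trans inf_le_left (hlam.mul_right y x), le_trans inf_le_left (hlam.mul_left x y)⟩,
      ⟨le_trans inf_le_right (hmu.mul_right y x), le_trans inf_le_right (hmu.mul_left x y)⟩⟩

/-- The hyperideal generated by `x`, as an inductive predicate. -/
inductive genI (x : R) : R → Prop
  | base : genI x x
  | addc {a b c : R} : genI x a → genI x b → c ∈ hadd a b → genI x c
  | mull (r : R) {a : R} : genI x a → genI x (mul r a)
  | mulr (r : R) {a : R} : genI x a → genI x (mul a r)

lemma genI_isHyperideal (x : R) : IsHyperideal {z | genI x z} := by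
  refine ⟨⟨x, genI.base⟩, ?_, ?_⟩
  · intro a ha b hb c hc
    exact genI.addc ha hb hc
  · intro r a ha
    exact ⟨genI.mull r ha, genI.mulr r ha⟩

lemma le_of_genI {lam : R → unitInterval} (h : IsFuzzyHyperideal lam) {x z : R}
    (hz : genI x z) : lam x ≤ lam z := by
  induction hz with
  | base => exact le_rfl
  | addc ha hb hc iha ihb =>
      exact le_trans (le_inf iha ihb) (le_trans (h.1 _ _) (biInf_le _ hc))
  | mull r _ ih => exact le_trans ih (h.mul_left r _)
  | mulr r _ ih => exact le_trans ih (h.mul_right r _)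

lemma le_fprod_self (hF : FullyIdempotent R) {lam : R → unitInterval}
    (h : IsFuzzyHyperideal lam) : lam ≤ fprod lam lam := by
  intro x
  have hI := hF _ (genI_isHyperideal x)
  have hx : x ∈ setProd {z | genI x z} {z | genI x z} := by rw [hI]; exact genI.base
  rcases hx with ⟨l, hl, hmem, hxl⟩
  refine le_sSup_of_le ⟨l, hl, hxl, rfl⟩ ?_
  exact le_iInf₂ fun p hp =>
    le_inf (le_of_genI h (hmem p hp).1) (le_of_genI h (hmem p hp).2)

lemma fprod_eq_inf (hF : FullyIdempotent R) {lam mu : R → unitInterval}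
    (hlam : IsFuzzyHyperideal lam) (hmu : IsFuzzyHyperideal mu) :
    fprod lam mu = lam ⊓ mu := by
  refine le_antisymm (fprod_le_inf hlam hmu) ?_
  calc lam ⊓ mu ≤ fprod (lam ⊓ mu) (lam ⊓ mu) := le_fprod_self hF (hlam.inf hmu)
    _ ≤ fprod lam mu := fprod_mono inf_le_left inf_le_right

end Semihyperring
namespace Semihyperring
variable {R : Type*} [Semihyperring R]

/-- Closure of a fuzzy subset under hypersums. -/
noncomputable def clo (f : R → unitInterval) (x : R) : unitInterval :=
  sSup {t | ∃ l : List R, l ≠ [] ∧ x ∈ hsumList l ∧ t = ⨅ y ∈ l, f y}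

lemma le_clo (f : R → unitInterval) : f ≤ clo f := by
  intro x
  exact le_sSup ⟨[x], by simp, by simp [hsumList_singleton], by simp⟩

lemma clo_isFuzzyHyperideal {f : R → unitInterval}
    (hf : ∀ r y : R, f y ≤ f (mul r y) ∧ f y ≤ f (mul y r)) :
    IsFuzzyHyperideal (clo f) := by
  constructor
  · intro x y
    refine le_iInf₂ fun z hz => ?_
    rw [clo, clo, sSup_inf_sSup]
    refine iSup₂_le ?_
    rintro ⟨t, s⟩ ⟨⟨l, hl, hx, rfl⟩, ⟨m, hm, hy, rfl⟩⟩
    have hzmem : z ∈ hsumList (l ++ m) := by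
      rw [hsumList_append]
      exact mem_haddSet.2 ⟨x, hx, y, hy, hz⟩
    refine le_sSup_of_le ⟨l ++ m, by simp [hl], hzmem, rfl⟩ ?_
    rw [biInf_append]
  · intro x y
    refine sup_le ?_ ?_
    · apply sSup_le
      rintro t ⟨l, hl, hx, rfl⟩
      refine le_sSup_of_le ⟨l.map (fun w => mul w y), by simpa using hl,
        mul_mem_hsumList_right hx, rfl⟩ ?_
      refine le_iInf₂ fun w hw => ?_
      rcases List.mem_map.1 hw with ⟨u, hu, rfl⟩
      exact le_trans (biInf_le _ hu) (hf y u).2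
    · apply sSup_le
      rintro t ⟨l, hl, hy, rfl⟩
      refine le_sSup_of_le ⟨l.map (mul x), by simpa using hl,
        mul_mem_hsumList_left hy, rfl⟩ ?_
      refine le_iInf₂ fun w hw => ?_
      rcases List.mem_map.1 hw with ⟨u, hu, rfl⟩
      exact le_trans (biInf_le _ hu) (hf x u).1

/-- Key bound: if `fprod σ θ ≤ μ` then the closures of `μ ⊔ σ` and `μ ⊔ θ`
multiply into `μ`. -/
lemma clo_mul_bound {mu sig the : R → unitInterval} (hmu : IsFuzzyHyperideal mu)
    (_hsig : IsFuzzyHyperideal sig) (_hthe : IsFuzzyHyperideal the)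
    (hst : fprod sig the ≤ mu) (u v : R) :
    clo (mu ⊔ sig) u ⊓ clo (mu ⊔ the) v ≤ mu (mul u v) := by
  rw [clo, clo, sSup_inf_sSup]
  refine iSup₂_le ?_
  rintro ⟨t, s⟩ ⟨⟨l, hl, hu, rfl⟩, ⟨m, hm, hv, rfl⟩⟩
  obtain ⟨L, hLne, hLmem, hLmul⟩ := mul_mem_hsumList_prod hl hm hu hv
  have step1 : (⨅ p ∈ L, mu (mul p.1 p.2)) ≤ mu (mul u v) := by
    have := inf_le_of_mem_hsumList hmu.1 _ (by simpa using hLne) _ hLmul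
    refine le_trans ?_ this
    refine le_iInf₂ fun w hw => ?_
    rcases List.mem_map.1 hw with ⟨p, hp, rfl⟩
    exact biInf_le _ hp
  refine le_trans ?_ step1
  refine le_iInf₂ fun p hp => ?_
  obtain ⟨hp1, hp2⟩ := hLmem p hp
  have h1 : (⨅ y ∈ l, (mu ⊔ sig) y) ≤ (mu ⊔ sig) p.1 := biInf_le _ hp1
  have h2 : (⨅ y ∈ m, (mu ⊔ the) y) ≤ (mu ⊔ the) p.2 := biInf_le _ hp2
  refine le_trans (inf_le_inf h1 h2) ?_
  -- (mu ⊔ sig) p.1 ⊓ (mu ⊔ the) p.2 ≤ mu (p.1 * p.2)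
  simp only [Pi.sup_apply]
  rcases le_total (mu p.1) (sig p.1) with ha | ha <;>
    rcases le_total (mu p.2) (the p.2) with hb | hb
  · rw [sup_eq_right.2 ha, sup_eq_right.2 hb]
    exact le_trans (le_fprod_single sig the p.1 p.2) (hst _)
  · rw [sup_eq_right.2 ha, sup_eq_left.2 hb]
    exact le_trans inf_le_right (hmu.mul_left p.1 p.2)
  · rw [sup_eq_left.2 ha, sup_eq_right.2 hb]
    exact le_trans inf_le_left (hmu.mul_right p.2 p.1)
  · rw [sup_eq_left.2 ha, sup_eq_left.2 hb]
    exact le_trans inf_le_left (hmu.mul_right p.2 p.1)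

lemma sup_mul_cond {mu sig : R → unitInterval} (hmu : IsFuzzyHyperideal mu)
    (hsig : IsFuzzyHyperideal sig) (r y : R) :
    (mu ⊔ sig) y ≤ (mu ⊔ sig) (mul r y) ∧ (mu ⊔ sig) y ≤ (mu ⊔ sig) (mul y r) := by
  constructor
  · exact sup_le_sup (hmu.mul_left r y) (hsig.mul_left r y)
  · exact sup_le_sup (hmu.mul_right r y) (hsig.mul_right r y)

/-- A maximal element of `{ν : fuzzy hyperideal, λ ≤ ν, ν x ≤ λ x}` is fuzzy prime. -/
lemma maximal_isPrime (hF : FullyIdempotent R) {lam : R → unitInterval}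
    (x : R) {mu : R → unitInterval}
    (hmax : Maximal (· ∈ {ν : R → unitInterval |
      IsFuzzyHyperideal ν ∧ lam ≤ ν ∧ ν x ≤ lam x}) mu) :
    IsFuzzyPrimeHyperideal mu := by
  obtain ⟨⟨hmu, hlammu, hmux⟩, hmax2⟩ := hmax
  refine ⟨hmu, fun sig the hsig hthe hprod => ?_⟩
  by_contra hcon
  push_neg at hcon
  obtain ⟨hns, hnt⟩ := hcon
  set g1 := clo (mu ⊔ sig) with hg1
  set g2 := clo (mu ⊔ the) with hg2
  have hg1f : IsFuzzyHyperideal g1 := clo_isFuzzyHyperideal fun r y => sup_mul_cond hmu hsig r y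
  have hg2f : IsFuzzyHyperideal g2 := clo_isFuzzyHyperideal fun r y => sup_mul_cond hmu hthe r y
  have hmug1 : mu ≤ g1 := le_trans le_sup_left (le_clo _)
  have hmug2 : mu ≤ g2 := le_trans le_sup_left (le_clo _)
  have hgx1 : ¬ g1 x ≤ lam x := by
    intro hle
    have : g1 ≤ mu := hmax2 ⟨hg1f, le_trans hlammu hmug1, hle⟩ hmug1
    exact hns (le_trans (le_trans le_sup_right (le_clo (mu ⊔ sig))) this)
  have hgx2 : ¬ g2 x ≤ lam x := by
    intro hle
    have : g2 ≤ mu := hmax2 ⟨hg2f, le_trans hlammu hmug2, hle⟩ hmug2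
    exact hnt (le_trans (le_trans le_sup_right (le_clo (mu ⊔ the))) this)
  -- fprod g1 g2 = g1 ⊓ g2 ≤ mu
  have hle : g1 ⊓ g2 ≤ mu := by
    rw [← fprod_eq_inf hF hg1f hg2f]
    exact fprod_le hmu.1 (clo_mul_bound hmu hsig hthe hprod)
  have h1 : lam x < g1 x := lt_of_not_ge hgx1
  have h2 : lam x < g2 x := lt_of_not_ge hgx2
  have : g1 x ⊓ g2 x ≤ lam x := le_trans (hle x) hmux
  exact absurd this (not_le.2 (lt_inf_iff.2 ⟨h1, h2⟩))

end Semihyperring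
namespace Semihyperring
variable {R : Type*} [Semihyperring R]

lemma exists_prime_above (hF : FullyIdempotent R) {lam : R → unitInterval}
    (hlam : IsFuzzyHyperideal lam) (x : R) :
    ∃ η : R → unitInterval, IsFuzzyPrimeHyperideal η ∧ lam ≤ η ∧ η x ≤ lam x := by
  set S : Set (R → unitInterval) :=
    {ν | IsFuzzyHyperideal ν ∧ lam ≤ ν ∧ ν x ≤ lam x} with hS
  have hlamS : lam ∈ S := ⟨hlam, le_rfl, le_rfl⟩
  have key : ∀ c ⊆ S, IsChain (· ≤ ·) c → ∀ y ∈ c, ∃ ub ∈ S, ∀ z ∈ c, z ≤ ub := by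
    intro c hcS hchain y hyc
    refine ⟨fun r => ⨆ ν ∈ c, ν r, ⟨⟨?_, ?_⟩, ?_, ?_⟩, ?_⟩
    · -- additive condition
      intro a b
      refine le_iInf₂ fun z hz => ?_
      rw [biSup_inf_biSup]
      refine iSup₂_le ?_
      rintro ⟨ν, ν'⟩ ⟨hν, hν'⟩
      rcases hchain.total hν hν' with h | h
      · refine le_trans (inf_le_inf (h a) le_rfl) ?_
        exact le_trans (le_trans ((hcS hν').1.1 a b) (biInf_le _ hz)) (le_biSup (fun ν : R → unitInterval => ν z) hν')
      · refine le_trans (inf_le_inf le_rfl (h b)) ?_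
        exact le_trans (le_trans ((hcS hν).1.1 a b) (biInf_le _ hz)) (le_biSup (fun ν : R → unitInterval => ν z) hν)
    · -- multiplicative condition
      intro a b
      refine sup_le (iSup₂_le fun ν hν => ?_) (iSup₂_le fun ν hν => ?_)
      · exact le_trans ((hcS hν).1.mul_right b a) (le_biSup (fun ν : R → unitInterval => ν (mul a b)) hν)
      · exact le_trans ((hcS hν).1.mul_left a b) (le_biSup (fun ν : R → unitInterval => ν (mul a b)) hν)
    · exact le_trans (hcS hyc).2.1 (fun r => le_biSup (fun ν : R → unitInterval => ν r) hyc)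
    · exact iSup₂_le fun ν hν => (hcS hν).2.2
    · intro ν hν r
      exact le_biSup (fun ν : R → unitInterval => ν r) hν
  obtain ⟨m, hlm, hmax⟩ := zorn_le_nonempty₀ S key lam hlamS
  exact ⟨m, maximal_isPrime hF x hmax, hmax.1.2.1, hmax.1.2.2⟩

lemma fprod_isFuzzyHyperideal {lam mu : R → unitInterval} (hlam : IsFuzzyHyperideal lam)
    (hmu : IsFuzzyHyperideal mu) : IsFuzzyHyperideal (fprod lam mu) := by
  constructor
  · intro a b
    refine le_iInf₂ fun z hz => ?_
    rw [fprod, fprod, sSup_inf_sSup]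
    refine iSup₂_le ?_
    rintro ⟨t, s⟩ ⟨⟨l, hl, ha, rfl⟩, ⟨m, hm, hb, rfl⟩⟩
    have hzmem : z ∈ hsumList ((l ++ m).map fun p => mul p.1 p.2) := by
      rw [List.map_append, hsumList_append]
      exact mem_haddSet.2 ⟨a, ha, b, hb, hz⟩
    refine le_sSup_of_le ⟨l ++ m, by simp [hl], hzmem, rfl⟩ ?_
    rw [biInf_append]
  · intro a b
    refine sup_le ?_ ?_
    · apply sSup_le
      rintro t ⟨l, hl, ha, rfl⟩
      have hmem : mul a b ∈
          hsumList ((l.map fun p => (p.1, mul p.2 b)).map fun p => mul p.1 p.2) := by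
        have := mul_mem_hsumList_right (r := b) ha
        rw [List.map_map] at this ⊢
        have heq : ((fun p : R × R => mul p.1 p.2) ∘ fun p : R × R => (p.1, mul p.2 b)) =
            ((fun y => mul y b) ∘ fun p : R × R => mul p.1 p.2) := by
          funext p
          exact (mul_assoc p.1 p.2 b).symm
        rw [heq]
        exact this
      refine le_sSup_of_le ⟨l.map fun p => (p.1, mul p.2 b), by simpa using hl, hmem, rfl⟩ ?_
      refine le_iInf₂ fun p hp => ?_
      rcases List.mem_map.1 hp with ⟨q, hq, rfl⟩
      exact le_trans (biInf_le _ hq) (inf_le_inf le_rfl (hmu.mul_right b q.2))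
    · apply sSup_le
      rintro t ⟨l, hl, hb, rfl⟩
      have hmem : mul a b ∈
          hsumList ((l.map fun p => (mul a p.1, p.2)).map fun p => mul p.1 p.2) := by
        have := mul_mem_hsumList_left (r := a) hb
        rw [List.map_map] at this ⊢
        have heq : ((fun p : R × R => mul p.1 p.2) ∘ fun p : R × R => (mul a p.1, p.2)) =
            (mul a ∘ fun p : R × R => mul p.1 p.2) := by
          funext p
          exact mul_assoc a p.1 p.2
        rw [heq]
        exact this
      refine le_sSup_of_le ⟨l.map fun p => (mul a p.1, p.2), by simpa using hl, hmem, rfl⟩ ?_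
      refine le_iInf₂ fun p hp => ?_
      rcases List.mem_map.1 hp with ⟨q, hq, rfl⟩
      exact le_trans (biInf_le _ hq) (inf_le_inf (hlam.mul_left a q.1) le_rfl)

end Semihyperring
namespace Semihyperring
variable {R : Type*} [Semihyperring R]

open Classical in
/-- Characteristic function of a subset. -/
noncomputable def chi (I : Set R) (x : R) : unitInterval := if x ∈ I then 1 else 0

lemma chi_isFuzzyHyperideal {I : Set R} (hI : IsHyperideal I) : IsFuzzyHyperideal (chi I) := by
  classical
  constructor
  · intro x y
    by_cases hx : x ∈ I
    · by_cases hy : y ∈ I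
      · refine le_iInf₂ fun z hz => ?_
        have hzI : z ∈ I := hI.2.1 x hx y hy hz
        have : chi I z = 1 := by simp [chi, hzI]
        rw [this]
        exact le_trans inf_le_left le_top
      · have : chi I y = 0 := by simp [chi, hy]
        rw [this]
        exact le_trans inf_le_right bot_le
    · have : chi I x = 0 := by simp [chi, hx]
      rw [this]
      exact le_trans inf_le_left bot_le
  · intro x y
    by_cases hx : x ∈ I
    · have h1 : mul x y ∈ I := (hI.2.2 y x hx).2
      have : chi I (mul x y) = 1 := by simp [chi, h1]
      rw [this]
      exact le_top
    · by_cases hy : y ∈ I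
      · have h1 : mul x y ∈ I := (hI.2.2 x y hy).1
        have : chi I (mul x y) = 1 := by simp [chi, h1]
        rw [this]
        exact le_top
      · have hx0 : chi I x = 0 := by simp [chi, hx]
        have hy0 : chi I y = 0 := by simp [chi, hy]
        rw [hx0, hy0]
        exact le_trans (sup_le le_rfl le_rfl) bot_le

lemma hsumList_subset {I : Set R} (hI : IsHyperideal I) :
    ∀ l : List R, l ≠ [] → (∀ y ∈ l, y ∈ I) → hsumList l ⊆ I := by
  intro l
  induction l with
  | nil => intro h; exact absurd rfl h
  | cons a l ih =>
      intro _ hmem x hx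
      rcases List.eq_nil_or_concat l with rfl | hl'
      · rw [hsumList_singleton] at hx
        rw [Set.mem_singleton_iff] at hx
        subst hx
        exact hmem _ List.mem_cons_self
      · have hlne : l ≠ [] := by rcases hl' with ⟨l', b, rfl⟩; simp
        rcases mem_hsumList_cons.1 hx with ⟨w, hw, hxw⟩
        have hwI : w ∈ I := ih hlne (fun y hy => hmem y (List.mem_cons_of_mem _ hy)) hw
        exact hI.2.1 a (hmem _ List.mem_cons_self) w hwI hxw

lemma mem_setProd_of_one_le {I : Set R} {x : R}
    (h1 : (1:unitInterval) ≤ fprod (chi I) (chi I) x) : x ∈ setProd I I := by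
  classical
  by_contra hcon
  have h0 : fprod (chi I) (chi I) x ≤ 0 := by
    apply sSup_le
    rintro t ⟨l, hl, hxl, rfl⟩
    by_cases hall : ∀ p ∈ l, p.1 ∈ I ∧ p.2 ∈ I
    · exact absurd ⟨l, hl, hall, hxl⟩ hcon
    · push_neg at hall
      obtain ⟨p, hp, hbad⟩ := hall
      refine le_trans (biInf_le _ hp) ?_
      by_cases hp1 : p.1 ∈ I
      · have hp2 : p.2 ∉ I := hbad hp1
        have : chi I p.2 = 0 := by simp [chi, hp2]
        rw [this]
        exact inf_le_right
      · have : chi I p.1 = 0 := by simp [chi, hp1]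
        rw [this]
        exact inf_le_left
  have hcontra : (1:unitInterval) ≤ 0 := le_trans h1 h0
  have : (1:ℝ) ≤ 0 := hcontra
  norm_num at this

end Semihyperring

open Semihyperring in
/-- `R` is fully idempotent iff every fuzzy hyperideal `λ` of `R` is the
pointwise infimum of the fuzzy prime hyperideals of `R` containing it. -/
theorem fullyIdempotent_iff_inf_of_primes (R : Type*) [Semihyperring R] :
    FullyIdempotent R ↔
      ∀ lam : R → unitInterval, IsFuzzyHyperideal lam → ∀ x : R,
        lam x = sInf {t | ∃ η : R → unitInterval,
          IsFuzzyPrimeHyperideal η ∧ lam ≤ η ∧ t = η x} := by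
  constructor
  · intro hF lam hlam x
    refine le_antisymm (le_sInf ?_) ?_
    · rintro t ⟨η, hη, hle, rfl⟩
      exact hle x
    · obtain ⟨η, hp, hle, hx⟩ := exists_prime_above hF hlam x
      exact le_trans (sInf_le ⟨η, hp, hle, rfl⟩) hx
  · intro hrep I hI
    refine Set.Subset.antisymm ?_ ?_
    · rintro x ⟨l, hl, hmem, hx⟩
      refine hsumList_subset hI _ (by simpa using hl) ?_ hx
      intro y hy
      rcases List.mem_map.1 hy with ⟨p, hp, rfl⟩
      exact (hI.2.2 p.1 p.2 (hmem p hp).2).1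
    · intro x hx
      classical
      have hchi := chi_isFuzzyHyperideal hI
      have hff := fprod_isFuzzyHyperideal hchi hchi
      have heq := hrep _ hff x
      have hle : chi I x ≤ fprod (chi I) (chi I) x := by
        rw [heq]
        refine le_sInf ?_
        rintro t ⟨η, hη, hpe, rfl⟩
        rcases hη.2 _ _ hchi hchi hpe with h | h
        · exact h x
        · exact h x
      have h1 : (1:unitInterval) ≤ fprod (chi I) (chi I) x := by
        have : chi I x = 1 := by simp [chi, hx]
        rw [← this]
        exact hle
      exact mem_setProd_of_one_le h1
end

section
/- Let (R, ⊕, ·) be a fully idempotent semihyperring. For fuzzy hyperideals δ₁, δ₂ of R, O_{δ₁} ∩ O_{δ₂} = O_{min(δ₁, δ₂)}, where min(δ₁, δ₂) is the pointwise minimum (which is a fuzzy hyperideal of R). -/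
namespace Semihyperring

variable {R : Type*} [Semihyperring R]

lemma mem_haddSet_singleton {a x : R} {S : Set R} :
    x ∈ haddSet {a} S ↔ ∃ w ∈ S, x ∈ hadd a w := by
  simp [haddSet]

lemma le_of_mem_hsumList {μ : R → unitInterval} (hμ : IsFuzzyHyperideal μ) :
    ∀ L : List R, L ≠ [] → ∀ t : unitInterval, (∀ a ∈ L, t ≤ μ a) →
      ∀ x ∈ hsumList L, t ≤ μ x := by
  intro L
  induction L with
  | nil => intro h; exact absurd rfl h
  | cons a tl ih =>
    intro _ t ht x hx
    have hx' : x ∈ haddSet {a} (hsumList tl) := hx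
    rw [mem_haddSet_singleton] at hx'
    obtain ⟨w, hw, hab⟩ := hx'
    cases tl with
    | nil =>
      simp only [hsumList, Set.mem_singleton_iff] at hw
      subst hw
      rw [hadd_zero] at hab
      rw [hab]
      exact ht a (by simp)
    | cons b tl' =>
      have hw' : t ≤ μ w :=
        ih (by simp) t (fun c hc => ht c (List.mem_cons_of_mem _ hc)) w hw
      calc t ≤ μ a ⊓ μ w := le_inf (ht a (by simp)) hw'
        _ ≤ ⨅ z ∈ hadd a w, μ z := hμ.1 a w
        _ ≤ μ x := biInf_le μ hab

lemma fprod_le_inf_s17 {d1 d2 : R → unitInterval} (h1 : IsFuzzyHyperideal d1)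
    (h2 : IsFuzzyHyperideal d2) : fprod d1 d2 ≤ d1 ⊓ d2 := by
  intro x
  apply sSup_le
  rintro t ⟨l, hl, hx, rfl⟩
  have hmap : (l.map fun p => mul p.1 p.2) ≠ [] := by
    simpa using hl
  refine le_inf ?_ ?_
  · refine le_of_mem_hsumList h1 _ hmap _ ?_ x hx
    rintro a ha
    simp only [List.mem_map] at ha
    obtain ⟨p, hp, rfl⟩ := ha
    calc (⨅ p ∈ l, d1 p.1 ⊓ d2 p.2) ≤ d1 p.1 ⊓ d2 p.2 := biInf_le _ hp
      _ ≤ d1 p.1 := inf_le_left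
      _ ≤ d1 (mul p.1 p.2) := le_sup_left.trans (h1.2 p.1 p.2)
  · refine le_of_mem_hsumList h2 _ hmap _ ?_ x hx
    rintro a ha
    simp only [List.mem_map] at ha
    obtain ⟨p, hp, rfl⟩ := ha
    calc (⨅ p ∈ l, d1 p.1 ⊓ d2 p.2) ≤ d1 p.1 ⊓ d2 p.2 := biInf_le _ hp
      _ ≤ d2 p.2 := inf_le_right
      _ ≤ d2 (mul p.1 p.2) := le_sup_right.trans (h2.2 p.1 p.2)

end Semihyperring

open Semihyperring in
/-- in a fully idempotent semihyperring, `O δ₁ ∩ O δ₂ = O (min (δ₁, δ₂))`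
for fuzzy hyperideals `δ₁, δ₂`. -/
theorem O_inter {R : Type*} [Semihyperring R] (h : FullyIdempotent R)
    (d1 d2 : R → unitInterval) (h1 : IsFuzzyHyperideal d1) (h2 : IsFuzzyHyperideal d2) :
    O d1 ∩ O d2 = O (d1 ⊓ d2) := by
  ext mu
  simp only [Set.mem_inter_iff, O, Set.mem_setOf_eq]
  constructor
  · rintro ⟨⟨hFP, hn1⟩, ⟨-, hn2⟩⟩
    refine ⟨hFP, fun hle => ?_⟩
    have hp : fprod d1 d2 ≤ mu := (fprod_le_inf_s17 h1 h2).trans hle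
    rcases hFP.1.2 d1 d2 h1 h2 hp with h | h
    · exact hn1 h
    · exact hn2 h
  · rintro ⟨hFP, hn⟩
    exact ⟨⟨hFP, fun hle => hn (le_trans inf_le_left hle)⟩,
      ⟨hFP, fun hle => hn (le_trans inf_le_right hle)⟩⟩
end

section
/- Let (R, ⊕, ·) be a fully idempotent semihyperring. Then τ(FP_R) = {O_λ : λ a fuzzy hyperideal of R} is a topology on the set FP_R; that is, ∅ ∈ τ(FP_R) and FP_R ∈ τ(FP_R), τ(FP_R) is closed under finite intersections, and τ(FP_R) is closed under arbitrary unions. -/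
open Semihyperring

/-- `τ(FP_R) = {O_λ : λ a fuzzy hyperideal of R}`. -/
def spectralTopology (R : Type*) [Semihyperring R] : Set (Set (R → unitInterval)) :=
  {S | ∃ lam : R → unitInterval, IsFuzzyHyperideal lam ∧ S = O lam}


section Aux

variable {R : Type*} [Semihyperring R]

lemma aux_biInf_cons {α : Type*} (f : α → unitInterval) (a : α) (L : List α) :
    ⨅ x ∈ (a :: L), f x = f a ⊓ ⨅ x ∈ L, f x := by
  simp [List.mem_cons, iInf_or, iInf_inf_eq]

lemma aux_biInf_append {α : Type*} (f : α → unitInterval) (L₁ L₂ : List α) :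
    ⨅ x ∈ (L₁ ++ L₂), f x = (⨅ x ∈ L₁, f x) ⊓ ⨅ x ∈ L₂, f x := by
  simp [List.mem_append, iInf_or, iInf_inf_eq]

lemma aux_mem_hsum_cons {a x : R} {L : List R} (hx : x ∈ hsumList (a :: L)) :
    ∃ w ∈ hsumList L, x ∈ hadd a w := by
  simpa [hsumList, haddSet] using hx

lemma aux_hsum_cons_intro {a z u : R} {L : List R} (hu : u ∈ hsumList L)
    (hz : z ∈ hadd a u) : z ∈ hsumList (a :: L) := by
  simp only [hsumList, haddSet]
  exact Set.mem_biUnion rfl (Set.mem_biUnion hu hz)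

lemma aux_hadd_subset {L₁ L₂ : List R} {x y : R}
    (hx : x ∈ hsumList L₁) (hy : y ∈ hsumList L₂) :
    hadd x y ⊆ hsumList (L₁ ++ L₂) := by
  induction L₁ generalizing x with
  | nil =>
      simp only [hsumList, Set.mem_singleton_iff] at hx
      subst hx
      rw [List.nil_append, Semihyperring.zero_hadd]
      exact Set.singleton_subset_iff.mpr hy
  | cons a L ih =>
      obtain ⟨w, hw, hxw⟩ := aux_mem_hsum_cons hx
      intro z hz
      have h1 : z ∈ ⋃ v ∈ hadd a w, hadd v y := Set.mem_biUnion hxw hz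
      rw [← Semihyperring.hadd_assoc a w y] at h1
      obtain ⟨u, hu, hzu⟩ : ∃ u ∈ hadd w y, z ∈ hadd a u := by
        simpa using h1
      exact aux_hsum_cons_intro (ih hw hu) hzu

lemma aux_le_of_mem_hsum {μ : R → unitInterval}
    (hμ : ∀ x y : R, μ x ⊓ μ y ≤ ⨅ z ∈ hadd x y, μ z) :
    ∀ L : List R, L ≠ [] → ∀ x ∈ hsumList L, (⨅ a ∈ L, μ a) ≤ μ x := by
  intro L
  induction L with
  | nil => intro hc; exact absurd rfl hc
  | cons a L ih =>
      intro _ x hx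
      obtain ⟨w, hw, hxw⟩ := aux_mem_hsum_cons hx
      rw [aux_biInf_cons]
      have h3 : μ a ⊓ μ w ≤ μ x := (hμ a w).trans (iInf₂_le x hxw)
      rcases L with _ | ⟨b, L'⟩
      · simp only [hsumList, Set.mem_singleton_iff] at hw
        subst hw
        rw [Semihyperring.hadd_zero] at hxw
        simp only [Set.mem_singleton_iff] at hxw
        subst hxw
        exact inf_le_left
      · exact le_trans (inf_le_inf_left _ (ih (by simp) w hw)) h3

lemma aux_mul_right_mem {L : List R} {x : R} (hx : x ∈ hsumList L) (y : R) :
    mul x y ∈ hsumList (L.map fun a => mul a y) := by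
  induction L generalizing x with
  | nil =>
      simp only [hsumList, Set.mem_singleton_iff] at hx
      subst hx
      simp [hsumList, Semihyperring.zero_mul]
  | cons a L ih =>
      obtain ⟨w, hw, hxw⟩ := aux_mem_hsum_cons hx
      have h1 : mul x y ∈ hadd (mul a y) (mul w y) := by
        rw [← Semihyperring.right_distrib]
        exact ⟨x, hxw, rfl⟩
      exact aux_hsum_cons_intro (ih hw) h1

lemma aux_mul_left_mem {L : List R} {x : R} (hx : x ∈ hsumList L) (y : R) :
    mul y x ∈ hsumList (L.map fun a => mul y a) := by
  induction L generalizing x with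
  | nil =>
      simp only [hsumList, Set.mem_singleton_iff] at hx
      subst hx
      simp [hsumList, Semihyperring.mul_zero]
  | cons a L ih =>
      obtain ⟨w, hw, hxw⟩ := aux_mem_hsum_cons hx
      have h1 : mul y x ∈ hadd (mul y a) (mul y w) := by
        rw [← Semihyperring.left_distrib]
        exact ⟨x, hxw, rfl⟩
      exact aux_hsum_cons_intro (ih hw) h1

lemma aux_fprod_le_left {lam mu : R → unitInterval} (hl : IsFuzzyHyperideal lam) :
    fprod lam mu ≤ lam := by
  intro x
  refine sSup_le ?_
  rintro t ⟨l, hne, hx, rfl⟩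
  have key := aux_le_of_mem_hsum hl.1 (l.map fun p => mul p.1 p.2)
    (by simpa using hne) x hx
  refine le_trans (le_iInf₂ ?_) key
  rintro a ha
  simp only [List.mem_map] at ha
  obtain ⟨p, hp, rfl⟩ := ha
  exact le_trans (iInf₂_le p hp)
    (le_trans inf_le_left (le_trans le_sup_left (hl.2 p.1 p.2)))

lemma aux_fprod_le_right {lam mu : R → unitInterval} (hm : IsFuzzyHyperideal mu) :
    fprod lam mu ≤ mu := by
  intro x
  refine sSup_le ?_
  rintro t ⟨l, hne, hx, rfl⟩
  have key := aux_le_of_mem_hsum hm.1 (l.map fun p => mul p.1 p.2)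
    (by simpa using hne) x hx
  refine le_trans (le_iInf₂ ?_) key
  rintro a ha
  simp only [List.mem_map] at ha
  obtain ⟨p, hp, rfl⟩ := ha
  exact le_trans (iInf₂_le p hp)
    (le_trans inf_le_right (le_trans le_sup_right (hm.2 p.1 p.2)))

lemma aux_inf_ideal {lam mu : R → unitInterval} (hl : IsFuzzyHyperideal lam)
    (hm : IsFuzzyHyperideal mu) : IsFuzzyHyperideal (lam ⊓ mu) := by
  constructor
  · intro x y
    refine le_iInf₂ fun z hz => ?_
    have h1 : lam x ⊓ lam y ≤ lam z := (hl.1 x y).trans (iInf₂_le z hz)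
    have h2 : mu x ⊓ mu y ≤ mu z := (hm.1 x y).trans (iInf₂_le z hz)
    exact le_inf (le_trans (inf_le_inf inf_le_left inf_le_left) h1)
      (le_trans (inf_le_inf inf_le_right inf_le_right) h2)
  · intro x y
    exact le_inf (le_trans (sup_le_sup inf_le_left inf_le_left) (hl.2 x y))
      (le_trans (sup_le_sup inf_le_right inf_le_right) (hm.2 x y))

lemma aux_bot_ideal : IsFuzzyHyperideal (fun _ : R => (0 : unitInterval)) := by
  constructor
  · intro x y
    refine le_iInf₂ fun z _ => ?_
    simp
  · intro x y
    simp

lemma aux_top_ideal : IsFuzzyHyperideal (fun _ : R => (1 : unitInterval)) := by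
  constructor
  · intro x y
    exact le_iInf₂ fun z _ => inf_le_left
  · intro x y
    exact sup_le le_rfl le_rfl

lemma aux_famSum_ideal {ι : Type*} {η : ι → R → unitInterval}
    (hη : ∀ i, IsFuzzyHyperideal (η i)) : IsFuzzyHyperideal (famSum η) := by
  constructor
  · intro x y
    rw [famSum, famSum, sSup_inf_sSup]
    refine iSup₂_le ?_
    rintro ⟨t1, t2⟩ ⟨⟨l1, h1ne, hx, rfl⟩, ⟨l2, h2ne, hy, rfl⟩⟩
    refine le_iInf₂ fun z hz => ?_
    have hz2 : z ∈ hsumList ((l1 ++ l2).map Prod.snd) := by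
      rw [List.map_append]
      exact aux_hadd_subset hx hy hz
    have hmem : (⨅ p ∈ l1 ++ l2, η p.1 p.2) ∈
        {t | ∃ l : List (ι × R), l ≠ [] ∧ z ∈ hsumList (l.map Prod.snd) ∧
          t = ⨅ p ∈ l, η p.1 p.2} :=
      ⟨l1 ++ l2, by simp [h1ne], hz2, rfl⟩
    refine le_trans ?_ (le_sSup hmem)
    rw [aux_biInf_append]
  · intro x y
    refine sup_le (sSup_le ?_) (sSup_le ?_)
    · rintro t ⟨l, hne, hx, rfl⟩
      have hmem : mul x y ∈ hsumList ((l.map fun p => (p.1, mul p.2 y)).map Prod.snd) := by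
        have := aux_mul_right_mem hx y
        simpa [List.map_map, Function.comp_def] using this
      refine le_trans (le_iInf₂ ?_)
        (le_sSup ⟨l.map fun p => (p.1, mul p.2 y), by simpa using hne, hmem, rfl⟩)
      rintro p hp
      simp only [List.mem_map] at hp
      obtain ⟨q, hq, rfl⟩ := hp
      exact le_trans (iInf₂_le q hq) (le_trans le_sup_left ((hη q.1).2 q.2 y))
    · rintro t ⟨l, hne, hy, rfl⟩
      have hmem : mul x y ∈ hsumList ((l.map fun p => (p.1, mul x p.2)).map Prod.snd) := by
        have := aux_mul_left_mem hy x
        simpa [List.map_map, Function.comp_def] using this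
      refine le_trans (le_iInf₂ ?_)
        (le_sSup ⟨l.map fun p => (p.1, mul x p.2), by simpa using hne, hmem, rfl⟩)
      rintro p hp
      simp only [List.mem_map] at hp
      obtain ⟨q, hq, rfl⟩ := hp
      exact le_trans (iInf₂_le q hq) (le_trans le_sup_right ((hη q.1).2 x q.2))

lemma aux_le_famSum {ι : Type*} (η : ι → R → unitInterval) (i : ι) : η i ≤ famSum η := by
  intro x
  have hmem : x ∈ hsumList ([(i, x)].map Prod.snd) := by
    simp [hsumList, haddSet, Semihyperring.hadd_zero]
  refine le_sSup ⟨[(i, x)], by simp, hmem, ?_⟩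
  simp [aux_biInf_cons]

lemma aux_famSum_le {ι : Type*} {η : ι → R → unitInterval} {μ : R → unitInterval}
    (hμ : ∀ x y : R, μ x ⊓ μ y ≤ ⨅ z ∈ hadd x y, μ z)
    (hall : ∀ i, η i ≤ μ) : famSum η ≤ μ := by
  intro x
  refine sSup_le ?_
  rintro t ⟨l, hne, hx, rfl⟩
  have key := aux_le_of_mem_hsum hμ (l.map Prod.snd) (by simpa using hne) x hx
  refine le_trans (le_iInf₂ ?_) key
  rintro a ha
  simp only [List.mem_map] at ha
  obtain ⟨p, hp, rfl⟩ := ha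
  exact le_trans (iInf₂_le p hp) (hall p.1 p.2)

end Aux

/-- for a fully idempotent semihyperring `R`, `τ(FP_R)` is a topology on
`FP_R`: it contains `∅` and `FP_R`, and is closed under finite intersections and arbitrary
unions. -/
theorem spectralTopology_isTopology (R : Type*) [Semihyperring R] (h : FullyIdempotent R) :
    ∅ ∈ spectralTopology R ∧ FP R ∈ spectralTopology R ∧
      (∀ S ∈ spectralTopology R, ∀ T ∈ spectralTopology R, S ∩ T ∈ spectralTopology R) ∧
      (∀ C : Set (Set (R → unitInterval)), C ⊆ spectralTopology R →
        ⋃₀ C ∈ spectralTopology R) := by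
  classical
  refine ⟨?_, ?_, ?_, ?_⟩
  · refine ⟨fun _ => (0 : unitInterval), aux_bot_ideal, ?_⟩
    ext mu
    simp only [Set.mem_empty_iff_false, false_iff, O, Set.mem_sep_iff, not_and, not_not]
    intro _
    exact fun x => bot_le
  · refine ⟨fun _ => (1 : unitInterval), aux_top_ideal, ?_⟩
    ext mu
    constructor
    · intro hmu
      refine ⟨hmu, fun hle => hmu.2 ?_⟩
      funext x
      exact le_antisymm unitInterval.le_one' (hle x)
    · exact fun hm => hm.1
  · rintro S ⟨lam, hlam, rfl⟩ T ⟨mu, hmu, rfl⟩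
    refine ⟨lam ⊓ mu, aux_inf_ideal hlam hmu, ?_⟩
    ext eta
    simp only [O, Set.mem_inter_iff, Set.mem_sep_iff]
    constructor
    · rintro ⟨⟨hFP, hl⟩, ⟨-, hm⟩⟩
      refine ⟨hFP, fun hle => ?_⟩
      have hprod : fprod lam mu ≤ eta :=
        le_trans (le_inf (aux_fprod_le_left hlam) (aux_fprod_le_right hmu)) hle
      rcases hFP.1.2 lam mu hlam hmu hprod with hc | hc
      · exact hl hc
      · exact hm hc
    · rintro ⟨hFP, hlm⟩
      exact ⟨⟨hFP, fun hc => hlm (le_trans inf_le_left hc)⟩,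
        ⟨hFP, fun hc => hlm (le_trans inf_le_right hc)⟩⟩
  · intro C hC
    let η : {S // S ∈ C} → R → unitInterval := fun S => (hC S.2).choose
    have hη : ∀ S : {S // S ∈ C}, IsFuzzyHyperideal (η S) := fun S => (hC S.2).choose_spec.1
    have hO : ∀ S : {S // S ∈ C}, (S : Set (R → unitInterval)) = O (η S) :=
      fun S => (hC S.2).choose_spec.2
    refine ⟨famSum η, aux_famSum_ideal hη, ?_⟩
    ext mu
    simp only [Set.mem_sUnion, O, Set.mem_sep_iff]
    constructor
    · rintro ⟨S, hS, hmS⟩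
      rw [show S = O (η ⟨S, hS⟩) from hO ⟨S, hS⟩] at hmS
      obtain ⟨hFP, hnle⟩ := hmS
      exact ⟨hFP, fun hle => hnle (le_trans (aux_le_famSum η ⟨S, hS⟩) hle)⟩
    · rintro ⟨hFP, hnle⟩
      by_contra hcon
      push_neg at hcon
      apply hnle
      refine aux_famSum_le hFP.1.1.1 fun S => ?_
      by_contra hS
      exact hcon S.1 S.2 ((hO S) ▸ (⟨hFP, hS⟩ : mu ∈ O (η S)))
end
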